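/- Suppose in a round-robin allocation with R rounds, for every agent y later than agent x in the order and every round r ∈ {1,...,R−1}, the value to y of the item y receives in round r is at least the value to y of the item x receives in round r+1. Then V_y(B_y) ≥ V_y(B_x) − V_y(p¹_x), where p¹_x is the item x received in round 1. -/
import Mathlib


/-- If for each round r ∈ {1,...,R−1} the value to agent y of her round-r item
is at least the value to y of the item x receives in round r+1, then
V_y(B_y) ≥ V_y(B_x) − V_y(p¹_x). -/
theorem round_robin_later_agent_EF1_bound
    {R : ℕ} {Item : Type}
    (V : Item → ℝ) (hV : ∀ p, 0 ≤ V p)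
    (hR : 0 < R)
    (px py : Fin R → Item)
    (h : ∀ (r : Fin R) (hr : r.val + 1 < R), V (py r) ≥ V (px ⟨r.val + 1, hr⟩)) :
    ∑ r, V (py r) ≥ (∑ r, V (px r)) - V (px ⟨0, hR⟩) := by
  obtain ⟨n, rfl⟩ := Nat.exists_eq_succ_of_ne_zero hR.ne'
  rw [Fin.sum_univ_succ (fun r => V (px r)), Fin.sum_univ_castSucc (fun r => V (py r))]
  have h0 : (⟨0, hR⟩ : Fin (n+1)) = 0 := rfl
  rw [h0]
  have hle : ∑ i : Fin n, V (px i.succ) ≤ ∑ i : Fin n, V (py i.castSucc) := by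
    apply Finset.sum_le_sum
    intro i _
    have hh := h i.castSucc (by simp)
    have he : (⟨(i.castSucc : ℕ) + 1, by simp⟩ : Fin (n+1)) = i.succ := by
      apply Fin.ext; simp
    rw [he] at hh
    exact hh
  have := hV (py (Fin.last n))
  linarith
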